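/- For b ≥ 0 let ψ_b(z) = (e^{-(1/2)(b/(1+b²))²}/√(π(1+b²)))·(z - b(2+b²)/(1+b²))·e^{(b/(1+b²))z - |z|²/2}. Then M(ψ_b) = 1 and G_μ(ψ_b) = 1 + (μ - 1/2)/(1+b²)² for every μ > 0. -/

import Mathlib

open MeasureTheory

noncomputable def Mfun (u : ℂ → ℂ) : ℝ := ∫ z : ℂ, ‖u z‖ ^ 2
noncomputable def Pfun (u : ℂ → ℂ) : ℝ := ∫ z : ℂ, (‖z‖ ^ 2 - 1) * ‖u z‖ ^ 2
noncomputable def Hfun (u : ℂ → ℂ) : ℝ := (1 / 4) * ∫ z : ℂ, ‖u z‖ ^ 4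
noncomputable def Gfun (μ : ℝ) (u : ℂ → ℂ) : ℝ := 8 * Real.pi * Hfun u + μ * Pfun u

/-- The stationary wave
`ψ_b(z) = (e^{-(1/2)(b/(1+b²))²}/√(π(1+b²))) (z - b(2+b²)/(1+b²)) e^{(b/(1+b²))z - |z|²/2}`. -/
noncomputable def psi (b : ℝ) : ℂ → ℂ := fun z =>
  (((Real.exp (-(1 / 2) * (b / (1 + b ^ 2)) ^ 2) / Real.sqrt (Real.pi * (1 + b ^ 2)) : ℝ)) : ℂ) *
    (z - ((b * (2 + b ^ 2) / (1 + b ^ 2) : ℝ) : ℂ)) *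
    Complex.exp (((b / (1 + b ^ 2) : ℝ) : ℂ) * z - ((‖z‖ ^ 2 : ℝ) : ℂ) / 2)

lemma gauss_m0 {a : ℝ} : ∫ x : ℝ, Real.exp (-(a * x ^ 2)) = Real.sqrt (Real.pi / a) := by
  have := integral_gaussian a
  simpa [neg_mul] using this

lemma gauss_odd1 (a : ℝ) : ∫ x : ℝ, x * Real.exp (-(a * x ^ 2)) = 0 := by
  have h := integral_neg_eq_self (fun x : ℝ => x * Real.exp (-(a * x ^ 2))) volume
  rw [show (fun x : ℝ => -x * Real.exp (-(a * (-x) ^ 2))) =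
      fun x : ℝ => -(x * Real.exp (-(a * x ^ 2))) from funext fun x => by rw [neg_sq]; ring,
    integral_neg] at h
  linarith

lemma gauss_odd3 (a : ℝ) : ∫ x : ℝ, x ^ 3 * Real.exp (-(a * x ^ 2)) = 0 := by
  have h := integral_neg_eq_self (fun x : ℝ => x ^ 3 * Real.exp (-(a * x ^ 2))) volume
  rw [show (fun x : ℝ => (-x) ^ 3 * Real.exp (-(a * (-x) ^ 2))) =
      fun x : ℝ => -(x ^ 3 * Real.exp (-(a * x ^ 2))) from funext fun x => by rw [neg_sq]; ring,
    integral_neg] at h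
  linarith

lemma gauss_m2 {a : ℝ} (ha : 0 < a) :
    ∫ x : ℝ, x ^ 2 * Real.exp (-(a * x ^ 2)) = Real.sqrt (Real.pi / a) / (2 * a) := by
  have hsa : Real.sqrt a ≠ 0 := (Real.sqrt_pos.mpr ha).ne'
  calc ∫ x : ℝ, x ^ 2 * Real.exp (-(a * x ^ 2))
      = ∫ x : ℝ, (fun t : ℝ => t ^ 2 * Real.exp (-(a * t ^ 2))) |x| := by
        simp only [sq_abs]
    _ = 2 * ∫ t in Set.Ioi (0:ℝ), t ^ 2 * Real.exp (-(a * t ^ 2)) := integral_comp_abs (f := fun t : ℝ => t ^ 2 * Real.exp (-(a * t ^ 2)))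
    _ = 2 * ∫ t in Set.Ioi (0:ℝ), t ^ (2:ℝ) * Real.exp (-a * t ^ (2:ℝ)) := by
        congr 1
        refine setIntegral_congr_fun measurableSet_Ioi fun t _ => ?_
        rw [show (2:ℝ) = ((2:ℕ):ℝ) by norm_num, Real.rpow_natCast, neg_mul]
    _ = 2 * (a ^ (-(2 + 1) / 2 : ℝ) * (1 / 2) * Real.Gamma ((2 + 1) / 2)) := by
        rw [integral_rpow_mul_exp_neg_mul_rpow two_pos (by norm_num) ha]
    _ = Real.sqrt (Real.pi / a) / (2 * a) := by
        rw [show ((2:ℝ) + 1) / 2 = 1/2 + 1 by norm_num,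
          Real.Gamma_add_one (by norm_num : (1/2:ℝ) ≠ 0), Real.Gamma_one_half_eq,
          show (-((2:ℝ) + 1) / 2 : ℝ) = -(1 + 1/2) by norm_num,
          Real.rpow_neg ha.le, Real.rpow_add ha, Real.rpow_one, ← Real.sqrt_eq_rpow,
          Real.sqrt_div Real.pi_pos.le]
        field_simp

lemma gauss_m4 {a : ℝ} (ha : 0 < a) :
    ∫ x : ℝ, x ^ 4 * Real.exp (-(a * x ^ 2)) = 3 * Real.sqrt (Real.pi / a) / (4 * a ^ 2) := by
  have hsa : Real.sqrt a ≠ 0 := (Real.sqrt_pos.mpr ha).ne'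
  calc ∫ x : ℝ, x ^ 4 * Real.exp (-(a * x ^ 2))
      = ∫ x : ℝ, (fun t : ℝ => t ^ 4 * Real.exp (-(a * t ^ 2))) |x| := by
        simp only [show ∀ x : ℝ, |x| ^ 4 = x ^ 4 from fun x => by
          rw [show 4 = 2*2 by norm_num, pow_mul, pow_mul, sq_abs], sq_abs]
    _ = 2 * ∫ t in Set.Ioi (0:ℝ), t ^ 4 * Real.exp (-(a * t ^ 2)) := integral_comp_abs (f := fun t : ℝ => t ^ 4 * Real.exp (-(a * t ^ 2)))
    _ = 2 * ∫ t in Set.Ioi (0:ℝ), t ^ (4:ℝ) * Real.exp (-a * t ^ (2:ℝ)) := by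
        congr 1
        refine setIntegral_congr_fun measurableSet_Ioi fun t _ => ?_
        rw [show (2:ℝ) = ((2:ℕ):ℝ) by norm_num, show (4:ℝ) = ((4:ℕ):ℝ) by norm_num,
          Real.rpow_natCast, Real.rpow_natCast, neg_mul]
    _ = 2 * (a ^ (-(4 + 1) / 2 : ℝ) * (1 / 2) * Real.Gamma ((4 + 1) / 2)) := by
        rw [integral_rpow_mul_exp_neg_mul_rpow two_pos (by norm_num) ha]
    _ = 3 * Real.sqrt (Real.pi / a) / (4 * a ^ 2) := by
        rw [show ((4:ℝ) + 1) / 2 = 3/2 + 1 by norm_num,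
          Real.Gamma_add_one (by norm_num : (3/2:ℝ) ≠ 0),
          show (3/2 : ℝ) = 1/2 + 1 by norm_num,
          Real.Gamma_add_one (by norm_num : (1/2:ℝ) ≠ 0), Real.Gamma_one_half_eq,
          show (-((4:ℝ) + 1) / 2 : ℝ) = -(1 + (1 + 1/2)) by norm_num,
          Real.rpow_neg ha.le, Real.rpow_add ha, Real.rpow_add ha, Real.rpow_one,
          ← Real.sqrt_eq_rpow, Real.sqrt_div Real.pi_pos.le]
        field_simp
        ring


noncomputable def gpoly (a c0 c1 c2 c3 c4 : ℝ) : ℝ → ℝ := fun x =>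
  (c0 + c1 * x + c2 * x ^ 2 + c3 * x ^ 3 + c4 * x ^ 4) * Real.exp (-(a * x ^ 2))

lemma gauss_integrable_pow {a : ℝ} (ha : 0 < a) (k : ℕ) :
    Integrable (fun x : ℝ => x ^ k * Real.exp (-(a * x ^ 2))) := by
  have h := integrable_rpow_mul_exp_neg_mul_sq ha
    (s := (k : ℝ)) (lt_of_lt_of_le neg_one_lt_zero (Nat.cast_nonneg k))
  have h2 : (fun x : ℝ => x ^ ((k:ℕ):ℝ) * Real.exp (-a * x ^ 2)) =
      fun x : ℝ => x ^ k * Real.exp (-(a * x ^ 2)) :=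
    funext fun x => by rw [Real.rpow_natCast, neg_mul]
  exact h2 ▸ h

lemma gauss_integrable_exp {a : ℝ} (ha : 0 < a) :
    Integrable (fun x : ℝ => Real.exp (-(a * x ^ 2))) := by
  have := integrable_exp_neg_mul_sq ha
  simpa [neg_mul] using this

lemma gpoly_integrable {a : ℝ} (ha : 0 < a) (c0 c1 c2 c3 c4 : ℝ) :
    Integrable (gpoly a c0 c1 c2 c3 c4) := by
  have hrw : gpoly a c0 c1 c2 c3 c4 = fun x =>
      c0 * Real.exp (-(a * x ^ 2)) + (c1 * (x * Real.exp (-(a * x ^ 2))) +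
        (c2 * (x ^ 2 * Real.exp (-(a * x ^ 2))) + (c3 * (x ^ 3 * Real.exp (-(a * x ^ 2))) +
          c4 * (x ^ 4 * Real.exp (-(a * x ^ 2)))))) := funext fun x => by simp only [gpoly]; ring
  have i1 : Integrable (fun x : ℝ => x * Real.exp (-(a * x ^ 2))) := by
    have := gauss_integrable_pow ha 1; simpa [pow_one] using this
  rw [hrw]
  exact ((gauss_integrable_exp ha).const_mul c0).add ((i1.const_mul c1).add
    (((gauss_integrable_pow ha 2).const_mul c2).add
      (((gauss_integrable_pow ha 3).const_mul c3).add
        ((gauss_integrable_pow ha 4).const_mul c4))))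

lemma gpoly_integral {a : ℝ} (ha : 0 < a) (c0 c1 c2 c3 c4 : ℝ) :
    ∫ x : ℝ, gpoly a c0 c1 c2 c3 c4 x
      = (c0 + c2 / (2 * a) + 3 * c4 / (4 * a ^ 2)) * Real.sqrt (Real.pi / a) := by
  have hrw : gpoly a c0 c1 c2 c3 c4 = fun x =>
      c0 * Real.exp (-(a * x ^ 2)) + (c1 * (x * Real.exp (-(a * x ^ 2))) +
        (c2 * (x ^ 2 * Real.exp (-(a * x ^ 2))) + (c3 * (x ^ 3 * Real.exp (-(a * x ^ 2))) +
          c4 * (x ^ 4 * Real.exp (-(a * x ^ 2)))))) := funext fun x => by simp only [gpoly]; ring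
  have i1 : Integrable (fun x : ℝ => x * Real.exp (-(a * x ^ 2))) := by
    have := gauss_integrable_pow ha 1; simpa [pow_one] using this
  have h0 : Integrable (fun x : ℝ => c0 * Real.exp (-(a * x ^ 2))) :=
    (gauss_integrable_exp ha).const_mul c0
  have h1 : Integrable (fun x : ℝ => c1 * (x * Real.exp (-(a * x ^ 2)))) := i1.const_mul c1
  have h2 : Integrable (fun x : ℝ => c2 * (x ^ 2 * Real.exp (-(a * x ^ 2)))) :=
    (gauss_integrable_pow ha 2).const_mul c2
  have h3 : Integrable (fun x : ℝ => c3 * (x ^ 3 * Real.exp (-(a * x ^ 2)))) :=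
    (gauss_integrable_pow ha 3).const_mul c3
  have h4 : Integrable (fun x : ℝ => c4 * (x ^ 4 * Real.exp (-(a * x ^ 2)))) :=
    (gauss_integrable_pow ha 4).const_mul c4
  have h34 : Integrable (fun x : ℝ => c3 * (x ^ 3 * Real.exp (-(a * x ^ 2))) +
      c4 * (x ^ 4 * Real.exp (-(a * x ^ 2)))) := h3.add h4
  have h234 : Integrable (fun x : ℝ => c2 * (x ^ 2 * Real.exp (-(a * x ^ 2))) +
      (c3 * (x ^ 3 * Real.exp (-(a * x ^ 2))) + c4 * (x ^ 4 * Real.exp (-(a * x ^ 2))))) :=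
    h2.add h34
  have h1234 : Integrable (fun x : ℝ => c1 * (x * Real.exp (-(a * x ^ 2))) +
      (c2 * (x ^ 2 * Real.exp (-(a * x ^ 2))) + (c3 * (x ^ 3 * Real.exp (-(a * x ^ 2))) +
        c4 * (x ^ 4 * Real.exp (-(a * x ^ 2)))))) := h1.add h234
  rw [hrw, integral_add h0 h1234, integral_add h1 h234, integral_add h2 h34,
    integral_add h3 h4, integral_const_mul, integral_const_mul, integral_const_mul,
    integral_const_mul, integral_const_mul, gauss_m0, gauss_odd1, gauss_m2 ha,
    gauss_odd3 a, gauss_m4 ha]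
  ring

lemma prod_gauss_int {a : ℝ} (ha : 0 < a) (c m0 m1 m2 m3 m4 n0 n1 n2 n3 n4 : ℝ) :
    Integrable (fun p : ℝ × ℝ => gpoly a m0 m1 m2 m3 m4 (p.1 - c) * gpoly a n0 n1 n2 n3 n4 p.2)
      ((volume : Measure ℝ).prod volume) :=
  ((gpoly_integrable ha m0 m1 m2 m3 m4).comp_sub_right c).mul_prod
    (gpoly_integrable ha n0 n1 n2 n3 n4)

lemma prod_gauss {a : ℝ} (ha : 0 < a) (c m0 m1 m2 m3 m4 n0 n1 n2 n3 n4 : ℝ) :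
    ∫ p : ℝ × ℝ, gpoly a m0 m1 m2 m3 m4 (p.1 - c) * gpoly a n0 n1 n2 n3 n4 p.2
        ∂((volume : Measure ℝ).prod volume)
      = ((m0 + m2 / (2 * a) + 3 * m4 / (4 * a ^ 2)) * (n0 + n2 / (2 * a) + 3 * n4 / (4 * a ^ 2)))
        * Real.sqrt (Real.pi / a) ^ 2 := by
  have k1 : ∫ p : ℝ × ℝ, gpoly a m0 m1 m2 m3 m4 (p.1 - c) * gpoly a n0 n1 n2 n3 n4 p.2
        ∂((volume : Measure ℝ).prod volume)
      = (∫ x : ℝ, gpoly a m0 m1 m2 m3 m4 (x - c)) * ∫ y : ℝ, gpoly a n0 n1 n2 n3 n4 y :=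
    integral_prod_mul (fun x : ℝ => gpoly a m0 m1 m2 m3 m4 (x - c)) (gpoly a n0 n1 n2 n3 n4)
  rw [k1, integral_sub_right_eq_self (gpoly a m0 m1 m2 m3 m4) c,
    gpoly_integral ha, gpoly_integral ha]
  ring

lemma normsq_complex (w : ℂ) : ‖w‖ ^ 2 = w.re ^ 2 + w.im ^ 2 := by
  rw [Complex.sq_norm, Complex.normSq_apply]; ring

lemma integral_complex_re_im (F : ℝ → ℝ → ℝ) :
    ∫ z : ℂ, F z.re z.im = ∫ p : ℝ × ℝ, F p.1 p.2 :=
  ((Complex.volume_preserving_equiv_real_prod.symm).integral_comp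
    Complex.measurableEquivRealProd.symm.measurableEmbedding
    (fun z : ℂ => F z.re z.im)).symm

lemma psi_normsq (b : ℝ) (z : ℂ) :
    ‖psi b z‖ ^ 2 = (Real.pi * (1 + b ^ 2))⁻¹ *
      ((((z.re - b / (1 + b ^ 2)) - b) ^ 2 + z.im ^ 2) *
        (Real.exp (-(1 * (z.re - b / (1 + b ^ 2)) ^ 2)) * Real.exp (-(1 * z.im ^ 2)))) := by
  have hd : (0:ℝ) < 1 + b ^ 2 := by positivity
  have hd' : (1:ℝ) + b ^ 2 ≠ 0 := hd.ne'
  have h2 : ((‖z‖ ^ 2 : ℝ) : ℂ) / 2 = ((‖z‖ ^ 2 / 2 : ℝ) : ℂ) := by push_cast; ring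
  have hre : ((((b / (1 + b ^ 2) : ℝ)) : ℂ) * z - ((‖z‖ ^ 2 : ℝ) : ℂ) / 2).re
      = b / (1 + b ^ 2) * z.re - (z.re ^ 2 + z.im ^ 2) / 2 := by
    rw [h2, Complex.sub_re, Complex.mul_re, Complex.ofReal_re, Complex.ofReal_im,
      Complex.ofReal_re, ← normsq_complex]
    ring
  simp only [psi]
  rw [norm_mul, norm_mul, mul_pow, mul_pow,
    normsq_complex (z - ((b * (2 + b ^ 2) / (1 + b ^ 2) : ℝ) : ℂ)),
    Complex.sub_re, Complex.sub_im, Complex.ofReal_re, Complex.ofReal_im,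
    Complex.norm_exp, hre,
    Complex.norm_real, Real.norm_eq_abs, abs_of_nonneg (by positivity), div_pow,
    Real.sq_sqrt (by positivity : (0:ℝ) ≤ Real.pi * (1 + b ^ 2))]
  have hN : Real.exp (-(1 / 2) * (b / (1 + b ^ 2)) ^ 2) ^ 2
      = Real.exp (-((b / (1 + b ^ 2)) ^ 2)) := by
    rw [← Real.exp_nat_mul]; congr 1; push_cast; ring
  have hE2 : Real.exp (b / (1 + b ^ 2) * z.re - (z.re ^ 2 + z.im ^ 2) / 2) ^ 2
      = Real.exp (2 * (b / (1 + b ^ 2) * z.re) - z.re ^ 2 - z.im ^ 2) := by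
    rw [← Real.exp_nat_mul]; congr 1; push_cast; ring
  rw [hN, hE2]
  have hE : Real.exp (-((b / (1 + b ^ 2)) ^ 2))
        * Real.exp (2 * (b / (1 + b ^ 2) * z.re) - z.re ^ 2 - z.im ^ 2)
      = Real.exp (-(1 * (z.re - b / (1 + b ^ 2)) ^ 2)) * Real.exp (-(1 * z.im ^ 2)) := by
    rw [← Real.exp_add, ← Real.exp_add]; congr 1; ring
  have hB : z.re - b * (2 + b ^ 2) / (1 + b ^ 2) = (z.re - b / (1 + b ^ 2)) - b := by
    field_simp; ring
  rw [hB]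
  linear_combination (Real.pi * (1 + b ^ 2))⁻¹
    * (((z.re - b / (1 + b ^ 2)) - b) ^ 2 + z.im ^ 2) * hE

set_option maxHeartbeats 1000000 in
/-- `M(ψ_b) = 1` and `G_μ(ψ_b) = 1 + (μ - 1/2)/(1+b²)²` for every `μ > 0`. -/
theorem stmt11 (b : ℝ) (hb : 0 ≤ b) :
    Mfun (psi b) = 1 ∧
    ∀ μ : ℝ, 0 < μ → Gfun μ (psi b) = 1 + (μ - 1 / 2) / (1 + b ^ 2) ^ 2 := by
  have hd : (0:ℝ) < 1 + b ^ 2 := by positivity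
  have hd' : (1:ℝ) + b ^ 2 ≠ 0 := hd.ne'
  have hπ : Real.pi ≠ 0 := Real.pi_ne_zero
  have hsq1 : Real.sqrt (Real.pi / 1) ^ 2 = Real.pi := by
    rw [div_one]; exact Real.sq_sqrt Real.pi_pos.le
  have hsq2 : Real.sqrt (Real.pi / 2) ^ 2 = Real.pi / 2 :=
    Real.sq_sqrt (by positivity)
  have hM : Mfun (psi b) = 1 := by
    simp only [Mfun, psi_normsq]
    have pg0 : Integrable (fun p : ℝ × ℝ => gpoly 1 (b ^ 2) (-(2 * b)) 1 0 0 (p.1 - (b / (1 + b ^ 2))) * gpoly 1 ((Real.pi * (1 + b ^ 2))⁻¹) 0 0 0 0 p.2) ((volume : Measure ℝ).prod volume) := prod_gauss_int one_pos _ _ _ _ _ _ _ _ _ _ _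
    have pg1 : Integrable (fun p : ℝ × ℝ => gpoly 1 1 0 0 0 0 (p.1 - (b / (1 + b ^ 2))) * gpoly 1 0 0 ((Real.pi * (1 + b ^ 2))⁻¹) 0 0 p.2) ((volume : Measure ℝ).prod volume) := prod_gauss_int one_pos _ _ _ _ _ _ _ _ _ _ _

    have hdec : (fun p : ℝ × ℝ => (Real.pi * (1 + b ^ 2))⁻¹ * (((p.1 - b / (1 + b ^ 2) - b) ^ 2 + p.2 ^ 2) * (Real.exp (-(1 * (p.1 - b / (1 + b ^ 2)) ^ 2)) * Real.exp (-(1 * p.2 ^ 2))))) = fun p : ℝ × ℝ =>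
        gpoly 1 (b ^ 2) (-(2 * b)) 1 0 0 (p.1 - (b / (1 + b ^ 2))) * gpoly 1 ((Real.pi * (1 + b ^ 2))⁻¹) 0 0 0 0 p.2 +
        (gpoly 1 1 0 0 0 0 (p.1 - (b / (1 + b ^ 2))) * gpoly 1 0 0 ((Real.pi * (1 + b ^ 2))⁻¹) 0 0 p.2) := funext fun p => by
      simp only [gpoly]
      ring
    have step : (∫ z : ℂ, (Real.pi * (1 + b ^ 2))⁻¹ * (((z.re - b / (1 + b ^ 2) - b) ^ 2 + z.im ^ 2) * (Real.exp (-(1 * (z.re - b / (1 + b ^ 2)) ^ 2)) * Real.exp (-(1 * z.im ^ 2))))) = ∫ p : ℝ × ℝ, (Real.pi * (1 + b ^ 2))⁻¹ * (((p.1 - b / (1 + b ^ 2) - b) ^ 2 + p.2 ^ 2) * (Real.exp (-(1 * (p.1 - b / (1 + b ^ 2)) ^ 2)) * Real.exp (-(1 * p.2 ^ 2)))) :=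
      integral_complex_re_im fun x y => (Real.pi * (1 + b ^ 2))⁻¹ * (((x - b / (1 + b ^ 2) - b) ^ 2 + y ^ 2) * (Real.exp (-(1 * (x - b / (1 + b ^ 2)) ^ 2)) * Real.exp (-(1 * y ^ 2))))
    have final : (∫ p : ℝ × ℝ, (Real.pi * (1 + b ^ 2))⁻¹ * (((p.1 - b / (1 + b ^ 2) - b) ^ 2 + p.2 ^ 2) * (Real.exp (-(1 * (p.1 - b / (1 + b ^ 2)) ^ 2)) * Real.exp (-(1 * p.2 ^ 2))))) = 1 := by
      rw [show (volume : Measure (ℝ × ℝ)) = (volume : Measure ℝ).prod volume from rfl, hdec,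
        integral_add pg0 pg1, prod_gauss one_pos, prod_gauss one_pos, hsq1]
      field_simp
      ring
    exact step.trans final
  have hP : Pfun (psi b) = 1 / (1 + b ^ 2) ^ 2 := by
    simp only [Pfun, psi_normsq]
    simp only [normsq_complex]
    have pg0 : Integrable (fun p : ℝ × ℝ => gpoly 1 (b ^ 2 * (b / (1 + b ^ 2)) ^ 2 - b ^ 2) (2 * (b / (1 + b ^ 2)) * b ^ 2 - 2 * b * (b / (1 + b ^ 2)) ^ 2 + 2 * b) (b ^ 2 - 4 * b * (b / (1 + b ^ 2)) + (b / (1 + b ^ 2)) ^ 2 - 1) (2 * (b / (1 + b ^ 2)) - 2 * b) 1 (p.1 - (b / (1 + b ^ 2))) * gpoly 1 ((Real.pi * (1 + b ^ 2))⁻¹) 0 0 0 0 p.2) ((volume : Measure ℝ).prod volume) := prod_gauss_int one_pos _ _ _ _ _ _ _ _ _ _ _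
    have pg1 : Integrable (fun p : ℝ × ℝ => gpoly 1 ((b / (1 + b ^ 2)) ^ 2 - 1) (2 * (b / (1 + b ^ 2))) 1 0 0 (p.1 - (b / (1 + b ^ 2))) * gpoly 1 0 0 ((Real.pi * (1 + b ^ 2))⁻¹) 0 0 p.2) ((volume : Measure ℝ).prod volume) := prod_gauss_int one_pos _ _ _ _ _ _ _ _ _ _ _
    have pg2 : Integrable (fun p : ℝ × ℝ => gpoly 1 (b ^ 2) (-(2 * b)) 1 0 0 (p.1 - (b / (1 + b ^ 2))) * gpoly 1 0 0 ((Real.pi * (1 + b ^ 2))⁻¹) 0 0 p.2) ((volume : Measure ℝ).prod volume) := prod_gauss_int one_pos _ _ _ _ _ _ _ _ _ _ _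
    have pg3 : Integrable (fun p : ℝ × ℝ => gpoly 1 1 0 0 0 0 (p.1 - (b / (1 + b ^ 2))) * gpoly 1 0 0 0 0 ((Real.pi * (1 + b ^ 2))⁻¹) p.2) ((volume : Measure ℝ).prod volume) := prod_gauss_int one_pos _ _ _ _ _ _ _ _ _ _ _
    have s2 : Integrable (fun p : ℝ × ℝ => gpoly 1 (b ^ 2) (-(2 * b)) 1 0 0 (p.1 - (b / (1 + b ^ 2))) * gpoly 1 0 0 ((Real.pi * (1 + b ^ 2))⁻¹) 0 0 p.2 + (gpoly 1 1 0 0 0 0 (p.1 - (b / (1 + b ^ 2))) * gpoly 1 0 0 0 0 ((Real.pi * (1 + b ^ 2))⁻¹) p.2)) ((volume : Measure ℝ).prod volume) := pg2.add pg3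
    have s1 : Integrable (fun p : ℝ × ℝ => gpoly 1 ((b / (1 + b ^ 2)) ^ 2 - 1) (2 * (b / (1 + b ^ 2))) 1 0 0 (p.1 - (b / (1 + b ^ 2))) * gpoly 1 0 0 ((Real.pi * (1 + b ^ 2))⁻¹) 0 0 p.2 + (gpoly 1 (b ^ 2) (-(2 * b)) 1 0 0 (p.1 - (b / (1 + b ^ 2))) * gpoly 1 0 0 ((Real.pi * (1 + b ^ 2))⁻¹) 0 0 p.2 + (gpoly 1 1 0 0 0 0 (p.1 - (b / (1 + b ^ 2))) * gpoly 1 0 0 0 0 ((Real.pi * (1 + b ^ 2))⁻¹) p.2))) ((volume : Measure ℝ).prod volume) := pg1.add s2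
    have hdec : (fun p : ℝ × ℝ => (p.1 ^ 2 + p.2 ^ 2 - 1) * ((Real.pi * (1 + b ^ 2))⁻¹ * (((p.1 - b / (1 + b ^ 2) - b) ^ 2 + p.2 ^ 2) * (Real.exp (-(1 * (p.1 - b / (1 + b ^ 2)) ^ 2)) * Real.exp (-(1 * p.2 ^ 2)))))) = fun p : ℝ × ℝ =>
        gpoly 1 (b ^ 2 * (b / (1 + b ^ 2)) ^ 2 - b ^ 2) (2 * (b / (1 + b ^ 2)) * b ^ 2 - 2 * b * (b / (1 + b ^ 2)) ^ 2 + 2 * b) (b ^ 2 - 4 * b * (b / (1 + b ^ 2)) + (b / (1 + b ^ 2)) ^ 2 - 1) (2 * (b / (1 + b ^ 2)) - 2 * b) 1 (p.1 - (b / (1 + b ^ 2))) * gpoly 1 ((Real.pi * (1 + b ^ 2))⁻¹) 0 0 0 0 p.2 +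
        (gpoly 1 ((b / (1 + b ^ 2)) ^ 2 - 1) (2 * (b / (1 + b ^ 2))) 1 0 0 (p.1 - (b / (1 + b ^ 2))) * gpoly 1 0 0 ((Real.pi * (1 + b ^ 2))⁻¹) 0 0 p.2 +
        (gpoly 1 (b ^ 2) (-(2 * b)) 1 0 0 (p.1 - (b / (1 + b ^ 2))) * gpoly 1 0 0 ((Real.pi * (1 + b ^ 2))⁻¹) 0 0 p.2 +
        (gpoly 1 1 0 0 0 0 (p.1 - (b / (1 + b ^ 2))) * gpoly 1 0 0 0 0 ((Real.pi * (1 + b ^ 2))⁻¹) p.2))) := funext fun p => by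
      simp only [gpoly]
      ring
    have step : (∫ z : ℂ, (z.re ^ 2 + z.im ^ 2 - 1) * ((Real.pi * (1 + b ^ 2))⁻¹ * (((z.re - b / (1 + b ^ 2) - b) ^ 2 + z.im ^ 2) * (Real.exp (-(1 * (z.re - b / (1 + b ^ 2)) ^ 2)) * Real.exp (-(1 * z.im ^ 2)))))) = ∫ p : ℝ × ℝ, (p.1 ^ 2 + p.2 ^ 2 - 1) * ((Real.pi * (1 + b ^ 2))⁻¹ * (((p.1 - b / (1 + b ^ 2) - b) ^ 2 + p.2 ^ 2) * (Real.exp (-(1 * (p.1 - b / (1 + b ^ 2)) ^ 2)) * Real.exp (-(1 * p.2 ^ 2))))) :=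
      integral_complex_re_im fun x y => (x ^ 2 + y ^ 2 - 1) * ((Real.pi * (1 + b ^ 2))⁻¹ * (((x - b / (1 + b ^ 2) - b) ^ 2 + y ^ 2) * (Real.exp (-(1 * (x - b / (1 + b ^ 2)) ^ 2)) * Real.exp (-(1 * y ^ 2)))))
    have final : (∫ p : ℝ × ℝ, (p.1 ^ 2 + p.2 ^ 2 - 1) * ((Real.pi * (1 + b ^ 2))⁻¹ * (((p.1 - b / (1 + b ^ 2) - b) ^ 2 + p.2 ^ 2) * (Real.exp (-(1 * (p.1 - b / (1 + b ^ 2)) ^ 2)) * Real.exp (-(1 * p.2 ^ 2)))))) = 1 / (1 + b ^ 2) ^ 2 := by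
      rw [show (volume : Measure (ℝ × ℝ)) = (volume : Measure ℝ).prod volume from rfl, hdec,
        integral_add pg0 s1, integral_add pg1 s2, integral_add pg2 pg3, prod_gauss one_pos, prod_gauss one_pos, prod_gauss one_pos, prod_gauss one_pos, hsq1]
      field_simp
      ring
    exact step.trans final
  have h4 : ∀ z : ℂ, ‖psi b z‖ ^ 4 = (Real.pi * (1 + b ^ 2))⁻¹ ^ 2 * (((z.re - b / (1 + b ^ 2) - b) ^ 2 + z.im ^ 2) ^ 2 * (Real.exp (-(2 * (z.re - b / (1 + b ^ 2)) ^ 2)) * Real.exp (-(2 * z.im ^ 2)))) := by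
    intro z
    have expsq : ∀ t : ℝ, Real.exp (-(1 * t ^ 2)) ^ 2 = Real.exp (-(2 * t ^ 2)) := fun t => by
      rw [← Real.exp_nat_mul]; congr 1; push_cast; ring
    calc ‖psi b z‖ ^ 4 = (‖psi b z‖ ^ 2) ^ 2 := by ring
      _ = ((Real.pi * (1 + b ^ 2))⁻¹ * (((z.re - b / (1 + b ^ 2) - b) ^ 2 + z.im ^ 2) * (Real.exp (-(1 * (z.re - b / (1 + b ^ 2)) ^ 2)) * Real.exp (-(1 * z.im ^ 2))))) ^ 2 := by rw [psi_normsq]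
      _ = (Real.pi * (1 + b ^ 2))⁻¹ ^ 2 * (((z.re - b / (1 + b ^ 2) - b) ^ 2 + z.im ^ 2) ^ 2 *
            (Real.exp (-(1 * (z.re - b / (1 + b ^ 2)) ^ 2)) ^ 2 * Real.exp (-(1 * z.im ^ 2)) ^ 2)) := by ring
      _ = (Real.pi * (1 + b ^ 2))⁻¹ ^ 2 * (((z.re - b / (1 + b ^ 2) - b) ^ 2 + z.im ^ 2) ^ 2 * (Real.exp (-(2 * (z.re - b / (1 + b ^ 2)) ^ 2)) * Real.exp (-(2 * z.im ^ 2)))) := by rw [expsq, expsq]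
  have hH : Hfun (psi b) = ((1 + b ^ 2) ^ 2 - 1 / 2) / (8 * Real.pi * (1 + b ^ 2) ^ 2) := by
    have hint : (∫ z : ℂ, ‖psi b z‖ ^ 4)
        = ((1 + b ^ 2) ^ 2 - 1 / 2) / (2 * Real.pi * (1 + b ^ 2) ^ 2) := by
      simp only [h4]
      have pg0 : Integrable (fun p : ℝ × ℝ => gpoly 2 (b ^ 4) (-(4 * b ^ 3)) (6 * b ^ 2) (-(4 * b)) 1 (p.1 - (b / (1 + b ^ 2))) * gpoly 2 ((Real.pi * (1 + b ^ 2))⁻¹ ^ 2) 0 0 0 0 p.2) ((volume : Measure ℝ).prod volume) := prod_gauss_int two_pos _ _ _ _ _ _ _ _ _ _ _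
      have pg1 : Integrable (fun p : ℝ × ℝ => gpoly 2 (2 * b ^ 2) (-(4 * b)) 2 0 0 (p.1 - (b / (1 + b ^ 2))) * gpoly 2 0 0 ((Real.pi * (1 + b ^ 2))⁻¹ ^ 2) 0 0 p.2) ((volume : Measure ℝ).prod volume) := prod_gauss_int two_pos _ _ _ _ _ _ _ _ _ _ _
      have pg2 : Integrable (fun p : ℝ × ℝ => gpoly 2 1 0 0 0 0 (p.1 - (b / (1 + b ^ 2))) * gpoly 2 0 0 0 0 ((Real.pi * (1 + b ^ 2))⁻¹ ^ 2) p.2) ((volume : Measure ℝ).prod volume) := prod_gauss_int two_pos _ _ _ _ _ _ _ _ _ _ _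
      have s1 : Integrable (fun p : ℝ × ℝ => gpoly 2 (2 * b ^ 2) (-(4 * b)) 2 0 0 (p.1 - (b / (1 + b ^ 2))) * gpoly 2 0 0 ((Real.pi * (1 + b ^ 2))⁻¹ ^ 2) 0 0 p.2 + (gpoly 2 1 0 0 0 0 (p.1 - (b / (1 + b ^ 2))) * gpoly 2 0 0 0 0 ((Real.pi * (1 + b ^ 2))⁻¹ ^ 2) p.2)) ((volume : Measure ℝ).prod volume) := pg1.add pg2
      have hdec : (fun p : ℝ × ℝ => (Real.pi * (1 + b ^ 2))⁻¹ ^ 2 * (((p.1 - b / (1 + b ^ 2) - b) ^ 2 + p.2 ^ 2) ^ 2 * (Real.exp (-(2 * (p.1 - b / (1 + b ^ 2)) ^ 2)) * Real.exp (-(2 * p.2 ^ 2))))) = fun p : ℝ × ℝ =>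
          gpoly 2 (b ^ 4) (-(4 * b ^ 3)) (6 * b ^ 2) (-(4 * b)) 1 (p.1 - (b / (1 + b ^ 2))) * gpoly 2 ((Real.pi * (1 + b ^ 2))⁻¹ ^ 2) 0 0 0 0 p.2 +
          (gpoly 2 (2 * b ^ 2) (-(4 * b)) 2 0 0 (p.1 - (b / (1 + b ^ 2))) * gpoly 2 0 0 ((Real.pi * (1 + b ^ 2))⁻¹ ^ 2) 0 0 p.2 +
          (gpoly 2 1 0 0 0 0 (p.1 - (b / (1 + b ^ 2))) * gpoly 2 0 0 0 0 ((Real.pi * (1 + b ^ 2))⁻¹ ^ 2) p.2)) := funext fun p => by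
        simp only [gpoly]
        ring
      have step : (∫ z : ℂ, (Real.pi * (1 + b ^ 2))⁻¹ ^ 2 * (((z.re - b / (1 + b ^ 2) - b) ^ 2 + z.im ^ 2) ^ 2 * (Real.exp (-(2 * (z.re - b / (1 + b ^ 2)) ^ 2)) * Real.exp (-(2 * z.im ^ 2))))) = ∫ p : ℝ × ℝ, (Real.pi * (1 + b ^ 2))⁻¹ ^ 2 * (((p.1 - b / (1 + b ^ 2) - b) ^ 2 + p.2 ^ 2) ^ 2 * (Real.exp (-(2 * (p.1 - b / (1 + b ^ 2)) ^ 2)) * Real.exp (-(2 * p.2 ^ 2)))) :=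
        integral_complex_re_im fun x y => (Real.pi * (1 + b ^ 2))⁻¹ ^ 2 * (((x - b / (1 + b ^ 2) - b) ^ 2 + y ^ 2) ^ 2 * (Real.exp (-(2 * (x - b / (1 + b ^ 2)) ^ 2)) * Real.exp (-(2 * y ^ 2))))
      have final : (∫ p : ℝ × ℝ, (Real.pi * (1 + b ^ 2))⁻¹ ^ 2 * (((p.1 - b / (1 + b ^ 2) - b) ^ 2 + p.2 ^ 2) ^ 2 * (Real.exp (-(2 * (p.1 - b / (1 + b ^ 2)) ^ 2)) * Real.exp (-(2 * p.2 ^ 2))))) = ((1 + b ^ 2) ^ 2 - 1 / 2) / (2 * Real.pi * (1 + b ^ 2) ^ 2) := by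
        rw [show (volume : Measure (ℝ × ℝ)) = (volume : Measure ℝ).prod volume from rfl, hdec,
          integral_add pg0 s1, integral_add pg1 pg2, prod_gauss two_pos, prod_gauss two_pos, prod_gauss two_pos, hsq2]
        field_simp
        ring
      exact step.trans final
    simp only [Hfun, hint]
    rw [eq_div_iff (by positivity : (8:ℝ) * Real.pi * (1 + b ^ 2) ^ 2 ≠ 0)]
    field_simp
    ring
  refine ⟨hM, fun μ hμ => ?_⟩
  simp only [Gfun, hP, hH]
  field_simp
  ring
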